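/- Let X₀*, X₁*, …, X_B* be random variables constructed as follows: X₀* has distribution π, Y* is obtained by running a π-reversible Markov kernel K for T steps from X₀*, and X₁*, …, X_B* are obtained by independently running the time-reversal of K for T steps from Y*, conditionally independent given Y*. Then (X₀*, X₁*, …, X_B*) is exchangeable. -/

import Mathlib

open MeasureTheory ProbabilityTheory Finset
open scoped ENNReal

private lemma besag_ind_mul {E : Type*} [MeasurableSpace E] (π : Measure E)
    {s : Set E} (hs : MeasurableSet s) (f : E → ℝ≥0∞) :
    ∫⁻ x, s.indicator 1 x * f x ∂π = ∫⁻ x in s, f x ∂π := by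
  rw [← lintegral_indicator hs]
  congr 1; ext a
  by_cases h : a ∈ s <;> simp [h]

private lemma besag_swap_eq {E : Type*} [MeasurableSpace E] (π : Measure E)
    [IsProbabilityMeasure π] (κ : Kernel E E) [IsMarkovKernel κ]
    (h : ∀ A B : Set E, MeasurableSet A → MeasurableSet B →
      ∫⁻ x in A, κ x B ∂π = ∫⁻ x in B, κ x A ∂π) :
    (π ⊗ₘ κ).map Prod.swap = π ⊗ₘ κ := by
  haveI : IsProbabilityMeasure ((π ⊗ₘ κ).map Prod.swap) :=
    Measure.isProbabilityMeasure_map measurable_swap.aemeasurable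
  refine ext_of_generate_finite _ generateFrom_prod.symm isPiSystem_prod ?_ (by simp)
  rintro _ ⟨A, hA, B, hB, rfl⟩
  have hA' : MeasurableSet A := hA
  have hB' : MeasurableSet B := hB
  rw [Measure.map_apply measurable_swap (hA'.prod hB')]
  have hsw : Prod.swap ⁻¹' (A ×ˢ B) = B ×ˢ A := by
    ext p; simp [and_comm]
  rw [hsw, Measure.compProd_apply_prod hB' hA', Measure.compProd_apply_prod hA' hB',
    h B A hB' hA']

private lemma besag_sym {E : Type*} [MeasurableSpace E] (π : Measure E)
    [IsProbabilityMeasure π] (κ : Kernel E E) [IsMarkovKernel κ]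
    (hswap : (π ⊗ₘ κ).map Prod.swap = π ⊗ₘ κ)
    {g h : E → ℝ≥0∞} (hg : Measurable g) (hh : Measurable h) :
    ∫⁻ x, g x * ∫⁻ y, h y ∂(κ x) ∂π = ∫⁻ x, h x * ∫⁻ y, g y ∂(κ x) ∂π := by
  have hm : Measurable fun p : E × E => g p.1 * h p.2 :=
    (hg.comp measurable_fst).mul (hh.comp measurable_snd)
  have h1 : ∫⁻ x, g x * ∫⁻ y, h y ∂(κ x) ∂π = ∫⁻ p : E × E, g p.1 * h p.2 ∂(π ⊗ₘ κ) := by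
    rw [Measure.lintegral_compProd hm]
    simp_rw [lintegral_const_mul _ hh]
  have h2 : ∫⁻ p : E × E, g p.1 * h p.2 ∂(π ⊗ₘ κ)
      = ∫⁻ p : E × E, g p.2 * h p.1 ∂(π ⊗ₘ κ) := by
    conv_lhs => rw [← hswap]
    rw [lintegral_map hm measurable_swap]
    simp only [Prod.fst_swap, Prod.snd_swap]
  have hm2 : Measurable fun p : E × E => g p.2 * h p.1 :=
    (hg.comp measurable_snd).mul (hh.comp measurable_fst)
  have h3 : ∫⁻ p : E × E, g p.2 * h p.1 ∂(π ⊗ₘ κ)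
      = ∫⁻ x, h x * ∫⁻ y, g y ∂(κ x) ∂π := by
    rw [Measure.lintegral_compProd hm2]
    congr 1; ext x
    exact (lintegral_mul_const (h x) hg).trans (mul_comm _ _)
  rw [h1, h2, h3]

/-- The induction step: if `κ` is reversible (symmetric compProd) and commutes with the
reversible kernel `K`, then `K ∘ₖ κ` is reversible in the set sense. -/
private lemma besag_rev_step {E : Type*} [MeasurableSpace E] (π : Measure E)
    [IsProbabilityMeasure π] (K κ : Kernel E E) [IsMarkovKernel K] [IsMarkovKernel κ]
    (hswapκ : (π ⊗ₘ κ).map Prod.swap = π ⊗ₘ κ)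
    (hswapK : (π ⊗ₘ K).map Prod.swap = π ⊗ₘ K)
    (hc : κ ∘ₖ K = K ∘ₖ κ)
    {A B : Set E} (hA : MeasurableSet A) (hB : MeasurableSet B) :
    ∫⁻ x in A, (K ∘ₖ κ) x B ∂π = ∫⁻ x in B, (K ∘ₖ κ) x A ∂π := by
  have hKB : Measurable fun x => K x B := Kernel.measurable_coe K hB
  have hκA : Measurable fun x => κ x A := Kernel.measurable_coe κ hA
  have h1A : Measurable (A.indicator (1 : E → ℝ≥0∞)) := measurable_one.indicator hA
  have h1B : Measurable (B.indicator (1 : E → ℝ≥0∞)) := measurable_one.indicator hB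
  calc ∫⁻ x in A, (K ∘ₖ κ) x B ∂π
      = ∫⁻ x in A, ∫⁻ y, K y B ∂(κ x) ∂π := by
        refine setLIntegral_congr_fun hA (fun x _ => ?_)
        exact Kernel.comp_apply' K κ x hB
    _ = ∫⁻ x, A.indicator 1 x * ∫⁻ y, K y B ∂(κ x) ∂π := by
        rw [besag_ind_mul π hA]
    _ = ∫⁻ x, K x B * ∫⁻ y, A.indicator 1 y ∂(κ x) ∂π :=
        besag_sym π κ hswapκ h1A hKB
    _ = ∫⁻ x, κ x A * ∫⁻ y, B.indicator 1 y ∂(K x) ∂π := by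
        congr 1; ext x
        rw [lintegral_indicator_one hA, lintegral_indicator_one hB, mul_comm]
    _ = ∫⁻ x, B.indicator 1 x * ∫⁻ y, κ y A ∂(K x) ∂π :=
        besag_sym π K hswapK hκA h1B
    _ = ∫⁻ x in B, (K ∘ₖ κ) x A ∂π := by
        rw [besag_ind_mul π hB]
        refine setLIntegral_congr_fun hB (fun x _ => ?_)
        rw [← Kernel.comp_apply' κ K x hA, hc]

/-- Besag's construction: `X₀* ~ π`, `Y*` is obtained by running a `π`-reversible Markov
kernel `K` for `T` steps from `X₀*`, and `X₁*, …, X_B*` are obtained by independently running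
the time reversal of `K` (which equals `K` by reversibility) for `T` steps from `Y*`,
conditionally independent given `Y*`. Then `(X₀*, X₁*, …, X_B*)` is exchangeable. -/
theorem besag_exchangeable
    (E : Type*) [MeasurableSpace E]
    (K : ProbabilityTheory.Kernel E E) [ProbabilityTheory.IsMarkovKernel K]
    (π : MeasureTheory.Measure E) [MeasureTheory.IsProbabilityMeasure π]
    -- reversibility of K with respect to π
    (hrev : ∀ A B : Set E, MeasurableSet A → MeasurableSet B →
      ∫⁻ x in A, K x B ∂π = ∫⁻ x in B, K x A ∂π)
    (T B : ℕ) (hT : 0 < T) (hB : 0 < B)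
    -- the T-step kernel
    (KT : ProbabilityTheory.Kernel E E)
    (iter : ℕ → ProbabilityTheory.Kernel E E)
    (hiter0 : iter 0 = ProbabilityTheory.Kernel.id)
    (hiterS : ∀ t, iter (t + 1) = K ∘ₖ iter t)
    (hKT : KT = iter T)
    -- the underlying probability space and the random variables
    (Ω : Type*) [MeasurableSpace Ω] (Pr : MeasureTheory.Measure Ω)
    [MeasureTheory.IsProbabilityMeasure Pr]
    (X : Fin (B + 1) → Ω → E) (Y : Ω → E)
    (hXmeas : ∀ i, Measurable (X i)) (hYmeas : Measurable Y)
    -- joint law: X₀ ~ π, Y | X₀ ~ KT, and X₁,…,X_B iid ~ KT(Y,·) given Y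
    (hjoint : ∀ (A : Fin (B + 1) → Set E) (C : Set E),
      (∀ i, MeasurableSet (A i)) → MeasurableSet C →
      Pr {ω | (∀ i, X i ω ∈ A i) ∧ Y ω ∈ C} =
        ∫⁻ x₀ in A 0, ∫⁻ y in C, ∏ i : Fin B, KT y (A i.succ) ∂(KT x₀) ∂π) :
    -- exchangeability
    ∀ σ : Equiv.Perm (Fin (B + 1)),
      MeasureTheory.Measure.map (fun ω (i : Fin (B + 1)) => X (σ i) ω) Pr =
        MeasureTheory.Measure.map (fun ω (i : Fin (B + 1)) => X i ω) Pr := by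
  -- Markov instances for the iterates
  have hM : ∀ t, IsMarkovKernel (iter t) := by
    intro t
    induction t with
    | zero => rw [hiter0]; infer_instance
    | succ t ih => rw [hiterS]; exact Kernel.IsMarkovKernel.comp K (iter t)
  -- the iterates commute with K
  have hcomm : ∀ t, iter t ∘ₖ K = K ∘ₖ iter t := by
    intro t
    induction t with
    | zero => rw [hiter0, Kernel.id_comp, Kernel.comp_id]
    | succ t ih =>
        haveI := hM t
        rw [hiterS, Kernel.comp_assoc, ih, ← Kernel.comp_assoc]
  -- K itself is symmetric
  have hswapK : (π ⊗ₘ K).map Prod.swap = π ⊗ₘ K := besag_swap_eq π K hrev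
  -- symmetry of every iterate
  have hsym : ∀ t, (π ⊗ₘ iter t).map Prod.swap = π ⊗ₘ iter t := by
    intro t
    induction t with
    | zero =>
        rw [hiter0]
        refine besag_swap_eq π Kernel.id ?_
        intro A B' hA hB'
        have key : ∀ (S T' : Set E), MeasurableSet S → MeasurableSet T' →
            ∫⁻ x in S, (Kernel.id : Kernel E E) x T' ∂π = π (S ∩ T') := by
          intro S T' hS hT'
          have : ∀ x, (Kernel.id : Kernel E E) x T' = T'.indicator 1 x := fun x => by
            rw [Kernel.id_apply, Measure.dirac_apply' x hT']
          simp_rw [this]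
          rw [← besag_ind_mul π hS]
          have : ∀ x, S.indicator (1 : E → ℝ≥0∞) x * T'.indicator 1 x
              = (S ∩ T').indicator 1 x := fun x => by
            by_cases h1 : x ∈ S <;> by_cases h2 : x ∈ T' <;>
              simp [h1, h2, Set.indicator_apply]
          simp_rw [this]
          exact lintegral_indicator_one (hS.inter hT')
        rw [key A B' hA hB', key B' A hB' hA, Set.inter_comm]
    | succ t ih =>
        haveI := hM t
        rw [hiterS]
        exact besag_swap_eq π _ fun A B' hA hB' =>
          besag_rev_step π K (iter t) ih hswapK (hcomm t) hA hB'
  haveI : IsMarkovKernel KT := hKT ▸ hM T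
  have hswapKT : (π ⊗ₘ KT).map Prod.swap = π ⊗ₘ KT := hKT ▸ hsym T
  -- the law of the vector (X 0, ..., X B)
  have hlaw : ∀ (A : Fin (B + 1) → Set E), (∀ i, MeasurableSet (A i)) →
      Pr {ω | ∀ i, X i ω ∈ A i} = ∫⁻ x, ∏ i : Fin (B + 1), KT x (A i) ∂π := by
    intro A hA
    have h0 : Pr {ω | ∀ i, X i ω ∈ A i}
        = ∫⁻ x₀ in A 0, ∫⁻ y, ∏ i : Fin B, KT y (A i.succ) ∂(KT x₀) ∂π := by
      have := hjoint A Set.univ hA MeasurableSet.univ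
      simpa using this
    have hg : Measurable fun y => ∏ i : Fin B, KT y (A i.succ) :=
      Finset.measurable_prod univ fun i _ => Kernel.measurable_coe KT (hA i.succ)
    have h1A : Measurable ((A 0).indicator (1 : E → ℝ≥0∞)) :=
      measurable_one.indicator (hA 0)
    rw [h0, ← besag_ind_mul π (hA 0), besag_sym π KT hswapKT h1A hg]
    congr 1; ext x
    rw [lintegral_indicator_one (hA 0), Fin.prod_univ_succ fun i => KT x (A i), mul_comm]
  -- conclude
  intro σ
  have hmap1 : Measurable fun ω (i : Fin (B + 1)) => X (σ i) ω :=
    measurable_pi_lambda _ fun i => hXmeas (σ i)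
  have hmap2 : Measurable fun ω (i : Fin (B + 1)) => X i ω :=
    measurable_pi_lambda _ fun i => hXmeas i
  haveI : IsProbabilityMeasure (Pr.map fun ω (i : Fin (B + 1)) => X (σ i) ω) :=
    Measure.isProbabilityMeasure_map hmap1.aemeasurable
  haveI : IsProbabilityMeasure (Pr.map fun ω (i : Fin (B + 1)) => X i ω) :=
    Measure.isProbabilityMeasure_map hmap2.aemeasurable
  refine ext_of_generate_finite _ generateFrom_pi.symm isPiSystem_pi ?_ (by simp)
  rintro _ ⟨A, hA, rfl⟩
  have hA' : ∀ i, MeasurableSet (A i) := fun i => hA i (Set.mem_univ i)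
  have hAset : MeasurableSet (Set.univ.pi A) := MeasurableSet.univ_pi hA'
  rw [Measure.map_apply hmap1 hAset, Measure.map_apply hmap2 hAset]
  have hp1 : (fun ω (i : Fin (B + 1)) => X (σ i) ω) ⁻¹' Set.univ.pi A
      = {ω | ∀ i, X i ω ∈ A (σ⁻¹ i)} := by
    ext ω
    simp only [Set.mem_preimage, Set.mem_univ_pi, Set.mem_setOf_eq]
    constructor
    · intro h i
      simpa using h (σ⁻¹ i)
    · intro h i
      simpa using h (σ i)
  have hp2 : (fun ω (i : Fin (B + 1)) => X i ω) ⁻¹' Set.univ.pi A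
      = {ω | ∀ i, X i ω ∈ A i} := by
    ext ω; simp [Set.mem_univ_pi]
  rw [hp1, hp2, hlaw (fun i => A (σ⁻¹ i)) (fun i => hA' _), hlaw A hA']
  congr 1; ext x
  exact Equiv.prod_comp σ⁻¹ fun i => KT x (A i)
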